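/- arXiv:2511.19744 — 6 statements merged into one kernel-verified Lean document; each statement's English description precedes it below -/
import Mathlib

section
/- For all positive integers a and n, T(a*n) contains (T(a) ∪ T(n)) minus the set of prime divisors of a*n. -/
/-- A Toda prime of `n` is an odd prime `p` such that `p - 1` divides `4n`
and `gcd (p, 4n/(p-1)) = 1`. -/
def IsTodaPrime (n p : ℕ) : Prop :=
  p.Prime ∧ Odd p ∧ (p - 1) ∣ 4 * n ∧ Nat.gcd p (4 * n / (p - 1)) = 1

/-- The set of Toda primes of `n`. -/
def TodaSet (n : ℕ) : Set ℕ := {p | IsTodaPrime n p}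

lemma toda_aux {a n p : ℕ} (h : IsTodaPrime a p) (hpn : ¬ p ∣ n) :
    IsTodaPrime (a * n) p := by
  obtain ⟨hp, ho, hd, hg⟩ := h
  refine ⟨hp, ho, ?_, ?_⟩
  · exact dvd_trans hd ⟨n, by ring⟩
  · have h1 : 4 * (a * n) / (p - 1) = (4 * a / (p - 1)) * n := by
      obtain ⟨k, hk⟩ := hd
      have hp1 : 0 < p - 1 := by
        have := hp.two_le; omega
      rw [← mul_assoc, hk, Nat.mul_div_cancel_left _ hp1, mul_assoc,
        Nat.mul_div_cancel_left _ hp1]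
    rw [h1]
    have hnd : ¬ p ∣ (4 * a / (p - 1)) :=
      (Nat.Prime.coprime_iff_not_dvd hp).mp hg
    exact (Nat.Prime.coprime_iff_not_dvd hp).mpr
      (fun hdvd => ((Nat.Prime.dvd_mul hp).mp hdvd).elim hnd hpn)

theorem toda_mul_superset (a n : ℕ) (ha : 0 < a) (hn : 0 < n) :
    (TodaSet a ∪ TodaSet n) \ {p | p.Prime ∧ p ∣ a * n} ⊆ TodaSet (a * n) := by
  rintro p ⟨hmem, hnot⟩
  rcases hmem with h | h
  · have hp := h.1
    have : ¬ p ∣ n := fun hd => hnot ⟨hp, hd.mul_left a⟩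
    exact toda_aux h this
  · have hp := h.1
    have : ¬ p ∣ a := fun hd => hnot ⟨hp, hd.mul_right n⟩
    have := toda_aux h this
    rwa [mul_comm]
end

section
/- If a divides n (a, n positive integers), then T(a*n) contains T(n). -/
theorem toda_mul_divisor (a n : ℕ) (ha : 0 < a) (hn : 0 < n) (hdvd : a ∣ n) :
    TodaSet n ⊆ TodaSet (a * n) := by
  rintro p ⟨hp, hodd, hdiv, hg⟩
  have h2p := hp.two_le
  have hcop : Nat.Coprime p (p - 1) := by
    refine hp.coprime_iff_not_dvd.mpr fun h => ?_
    have := Nat.le_of_dvd (by omega) h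
    omega
  have hpa : Nat.Coprime p a := by
    by_contra h
    have hpdvda : p ∣ a := not_not.mp (hp.coprime_iff_not_dvd.not.mp h)
    have hpn : p ∣ n := hpdvda.trans hdvd
    have hp4n : p ∣ 4 * n / (p - 1) * (p - 1) := by
      rw [Nat.div_mul_cancel hdiv]
      exact Dvd.dvd.mul_left hpn 4
    have hdq : p ∣ 4 * n / (p - 1) := Nat.Coprime.dvd_of_dvd_mul_right hcop hp4n
    have hdvd1 : p ∣ 1 := hg ▸ Nat.dvd_gcd dvd_rfl hdq
    have := Nat.eq_one_of_dvd_one hdvd1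
    omega
  refine ⟨hp, hodd, ?_, ?_⟩
  · exact hdiv.trans ⟨a, by ring⟩
  · have key : 4 * (a * n) / (p - 1) = a * (4 * n / (p - 1)) := by
      have h2 : 4 * (a * n) = a * (4 * n) := by ring
      rw [h2, Nat.mul_div_assoc a hdiv]
    rw [key]
    exact Nat.Coprime.mul_right hpa hg
end

section
/- Let p ≥ 7 be prime. If there exists an integer x with Euler totient φ(x) = 4p, then T(p) equals {3, 5, 2p+1} or {3, 5, 4p+1}; otherwise T(p) = {3, 5}. -/
lemma dvd_four_mul_prime {p d : ℕ} (hp : p.Prime) (hd : d ∣ 4 * p) :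
    d = 1 ∨ d = 2 ∨ d = 4 ∨ d = p ∨ d = 2 * p ∨ d = 4 * p := by
  by_cases hpd : p ∣ d
  · obtain ⟨e, rfl⟩ := hpd
    rw [mul_comm 4 p] at hd
    have he : e ∣ 4 := (Nat.mul_dvd_mul_iff_left hp.pos).mp hd
    have h1 : 1 ≤ e := Nat.pos_of_dvd_of_pos he (by norm_num)
    have h4 : e ≤ 4 := Nat.le_of_dvd (by norm_num) he
    interval_cases e <;> omega
  · have hco : Nat.Coprime d p := ((Nat.Prime.coprime_iff_not_dvd hp).mpr hpd).symm
    have : d ∣ 4 := hco.dvd_of_dvd_mul_right hd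
    have h1 : 1 ≤ d := Nat.pos_of_dvd_of_pos this (by norm_num)
    have h4 : d ≤ 4 := Nat.le_of_dvd (by norm_num) this
    interval_cases d <;> omega

lemma toda_char (p : ℕ) (hp : p.Prime) (h7 : 7 ≤ p) (q : ℕ) :
    IsTodaPrime p q ↔
      q = 3 ∨ q = 5 ∨ (q = 2 * p + 1 ∧ (2 * p + 1).Prime) ∨
        (q = 4 * p + 1 ∧ (4 * p + 1).Prime) := by
  have hpodd : p % 2 = 1 := Nat.odd_iff.mp (hp.odd_of_ne_two (by omega))
  have hp3 : p ≠ 3 := by omega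
  have hp5 : p ≠ 5 := by omega
  constructor
  · rintro ⟨hq, hodd, hdvd, -⟩
    have hq2 : q % 2 = 1 := Nat.odd_iff.mp hodd
    have hq3 : 2 ≤ q := hq.two_le
    rcases dvd_four_mul_prime hp hdvd with h | h | h | h | h | h
    · omega
    · left; omega
    · right; left; omega
    · omega
    · right; right; left
      have : q = 2 * p + 1 := by omega
      exact ⟨this, this ▸ hq⟩
    · right; right; right
      have : q = 4 * p + 1 := by omega
      exact ⟨this, this ▸ hq⟩
  · rintro (rfl | rfl | ⟨rfl, hq⟩ | ⟨rfl, hq⟩)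
    · refine ⟨by norm_num, by decide, ⟨2 * p, by ring⟩, ?_⟩
      have hdiv : 4 * p / (3 - 1) = 2 * p := by omega
      rw [hdiv]
      refine (Nat.Prime.coprime_iff_not_dvd (by norm_num)).mpr ?_
      intro h
      rcases (Nat.Prime.dvd_mul (by norm_num)).mp h with h | h
      · norm_num at h
      · rcases (Nat.Prime.eq_one_or_self_of_dvd hp 3 h) with h | h <;> omega
    · refine ⟨by norm_num, by decide, ⟨p, by ring⟩, ?_⟩
      have hdiv : 4 * p / (5 - 1) = p := by omega
      rw [hdiv]
      refine (Nat.Prime.coprime_iff_not_dvd (by norm_num)).mpr ?_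
      intro h
      rcases (Nat.Prime.eq_one_or_self_of_dvd hp 5 h) with h | h <;> omega
    · refine ⟨hq, ⟨p, by ring⟩, ⟨2, by omega⟩, ?_⟩
      have h1 : 2 * p + 1 - 1 = 2 * p := by omega
      have h2 : (4 : ℕ) * p = 2 * p * 2 := by ring
      have hdiv : 4 * p / (2 * p + 1 - 1) = 2 := by
        rw [h1, h2]
        exact Nat.mul_div_cancel_left 2 (by omega)
      rw [hdiv]
      refine (Nat.coprime_comm.mp ((Nat.Prime.coprime_iff_not_dvd (by norm_num)).mpr ?_))
      omega
    · refine ⟨hq, ⟨2 * p, by ring⟩, dvd_refl _, ?_⟩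
      have hdiv : 4 * p / (4 * p + 1 - 1) = 1 := by
        have h1 : 4 * p + 1 - 1 = 4 * p := by omega
        rw [h1, Nat.div_self (by omega)]
      rw [hdiv]
      exact Nat.gcd_one_right _

lemma not_both_prime (p : ℕ) (hp : p.Prime) (h7 : 7 ≤ p) :
    ¬ ((2 * p + 1).Prime ∧ (4 * p + 1).Prime) := by
  rintro ⟨h1, h2⟩
  have hp3 : p % 3 ≠ 0 := by
    intro h
    have : (3 : ℕ) ∣ p := by omega
    rcases (Nat.Prime.eq_one_or_self_of_dvd hp 3 this) with h | h <;> omega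
  have h01 : p % 3 = 1 ∨ p % 3 = 2 := by omega
  rcases h01 with h | h
  · have : (3 : ℕ) ∣ 2 * p + 1 := by omega
    rcases h1.eq_one_or_self_of_dvd 3 this with h' | h' <;> omega
  · have : (3 : ℕ) ∣ 4 * p + 1 := by omega
    rcases h2.eq_one_or_self_of_dvd 3 this with h' | h' <;> omega

lemma prime_of_totient_eq (p : ℕ) (hp : p.Prime) (h7 : 7 ≤ p) (x : ℕ)
    (hx : Nat.totient x = 4 * p) : (2 * p + 1).Prime ∨ (4 * p + 1).Prime := by
  have hx0 : x ≠ 0 := by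
    intro h; rw [h] at hx; simp at hx; omega
  have hpdvd : p ∣ Nat.totient x := ⟨4, by omega⟩
  rw [Nat.totient_eq_prod_factorization hx0, Finsupp.prod] at hpdvd
  obtain ⟨q, hqmem, hqdvd⟩ := hp.prime.exists_mem_finset_dvd hpdvd
  rw [Nat.support_factorization] at hqmem
  have hqprime : q.Prime := Nat.prime_of_mem_primeFactors hqmem
  have hqx : q ∣ x := Nat.dvd_of_mem_primeFactors hqmem
  rcases (Nat.Prime.dvd_mul hp).mp hqdvd with h | h
  · -- p ∣ q ^ (k - 1), so p = q and p ^ 2 ∣ x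
    exfalso
    have hpq : p = q := by
      have := hp.dvd_of_dvd_pow h
      exact ((Nat.prime_dvd_prime_iff_eq hp hqprime).mp this)
    subst hpq
    have hk : 2 ≤ x.factorization p := by
      by_contra hk
      interval_cases h' : x.factorization p <;> simp_all <;> omega
    have hp2 : p ^ 2 ∣ x := dvd_trans (pow_dvd_pow p hk) (Nat.ordProj_dvd x p)
    have htot : Nat.totient (p ^ 2) ∣ Nat.totient x := Nat.totient_dvd_of_dvd hp2
    rw [Nat.totient_prime_pow hp (by norm_num), hx] at htot
    -- p ^ 1 * (p - 1) ∣ 4 * p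
    have : p * (p - 1) ∣ p * 4 := by
      rw [mul_comm p 4]
      simpa using htot
    have h4 : (p - 1) ∣ 4 := (Nat.mul_dvd_mul_iff_left hp.pos).mp this
    have := Nat.le_of_dvd (by norm_num) h4
    omega
  · -- p ∣ q - 1
    have hq1 : q - 1 ∣ Nat.totient x := by
      have := Nat.totient_dvd_of_dvd hqx
      rwa [Nat.totient_prime hqprime] at this
    rw [hx] at hq1
    obtain ⟨e, he⟩ := h
    have hed : p * e ∣ 4 * p := he ▸ hq1
    rw [mul_comm 4 p] at hed
    have he4 : e ∣ 4 := (Nat.mul_dvd_mul_iff_left hp.pos).mp hed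
    have hq2 : 2 ≤ q := hqprime.two_le
    have he0 : 1 ≤ e := by
      rcases Nat.eq_zero_or_pos e with rfl | h
      · omega
      · exact h
    have he4' : e ≤ 4 := Nat.le_of_dvd (by norm_num) he4
    have hpodd : p % 2 = 1 := Nat.odd_iff.mp (hp.odd_of_ne_two (by omega))
    have hcases : e = 1 ∨ e = 2 ∨ e = 4 := by
      interval_cases e <;> omega
    rcases hcases with rfl | rfl | rfl
    · -- q = p + 1, even and ≥ 8, contradiction with primality
      exfalso
      have hq : q = p + 1 := by omega
      have : (2 : ℕ) ∣ q := by omega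
      rcases hqprime.eq_one_or_self_of_dvd 2 this with h' | h' <;> omega
    · left
      have h' : q = 2 * p + 1 := by omega
      rw [← h']
      exact hqprime
    · right
      have h' : q = 4 * p + 1 := by omega
      rw [← h']
      exact hqprime

theorem toda_set_of_prime (p : ℕ) (hp : p.Prime) (h7 : 7 ≤ p) :
    ((∃ x : ℕ, Nat.totient x = 4 * p) →
      TodaSet p = {3, 5, 2 * p + 1} ∨ TodaSet p = {3, 5, 4 * p + 1}) ∧
    ((¬ ∃ x : ℕ, Nat.totient x = 4 * p) → TodaSet p = {3, 5}) := by
  constructor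
  · rintro ⟨x, hx⟩
    rcases prime_of_totient_eq p hp h7 x hx with h | h
    · left
      have hnot : ¬ (4 * p + 1).Prime := fun h' => not_both_prime p hp h7 ⟨h, h'⟩
      ext q
      simp only [TodaSet, Set.mem_setOf_eq, Set.mem_insert_iff, Set.mem_singleton_iff,
        toda_char p hp h7 q]
      tauto
    · right
      have hnot : ¬ (2 * p + 1).Prime := fun h' => not_both_prime p hp h7 ⟨h', h⟩
      ext q
      simp only [TodaSet, Set.mem_setOf_eq, Set.mem_insert_iff, Set.mem_singleton_iff,
        toda_char p hp h7 q]
      tauto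
  · intro hne
    have h1 : ¬ (2 * p + 1).Prime := by
      intro h
      refine hne ⟨4 * (2 * p + 1), ?_⟩
      have hc2 : Nat.Coprime 2 (2 * p + 1) :=
        (Nat.Prime.coprime_iff_not_dvd Nat.prime_two).mpr (by omega)
      have hco : Nat.Coprime 4 (2 * p + 1) := by
        have := Nat.Coprime.pow_left 2 hc2
        simpa using this
      rw [Nat.totient_mul hco, Nat.totient_prime h, show Nat.totient 4 = 2 from by decide]
      omega
    have h2 : ¬ (4 * p + 1).Prime := by
      intro h
      refine hne ⟨4 * p + 1, ?_⟩
      rw [Nat.totient_prime h]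
      omega
    ext q
    simp only [TodaSet, Set.mem_setOf_eq, Set.mem_insert_iff, Set.mem_singleton_iff,
      toda_char p hp h7 q]
    tauto
end

section
/- Let m be a positive integer. If the denominator of the Bernoulli number B_{12m} equals 2730, then T(3m) = {5, 7, 13}. -/
open Finset

/-! Auxiliary lemmas towards one direction of the von Staudt–Clausen theorem. -/

lemma two_add_le_three_pow {v : ℕ} (hv : 1 ≤ v) : v + 2 ≤ 3 ^ v := by
  induction v with
  | zero => omega
  | succ n ih =>
    rcases Nat.eq_zero_or_pos n with rfl | hn
    · norm_num
    · have h1 := ih hn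
      have h2 : 3 ^ (n+1) = 3 * 3 ^ n := by ring
      omega

lemma padicValNat_le_sub_two {p j : ℕ} (hp : 3 ≤ p) (hj : 2 ≤ j) :
    padicValNat p j ≤ j - 2 := by
  set v := padicValNat p j with hv
  have hdvd : p ^ v ∣ j := pow_padicValNat_dvd
  have hle : p ^ v ≤ j := Nat.le_of_dvd (by omega) hdvd
  have h3 : 3 ^ v ≤ p ^ v := Nat.pow_le_pow_left hp v
  rcases Nat.eq_zero_or_pos v with h | h
  · omega
  · have := two_add_le_three_pow h
    omega

lemma odd_prime_three_le {p : ℕ} (hp : p.Prime) (hodd : p ≠ 2) : 3 ≤ p := by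
  have := hp.two_le
  rcases Nat.lt_or_ge p 3 with h | h
  · interval_cases p <;> simp_all
  · exact h

lemma norm_ppow_div_le (p : ℕ) [hp : Fact p.Prime] (hodd : p ≠ 2) (j : ℕ) (hj : 2 ≤ j) :
    ‖((p : ℚ_[p]) ^ j / (j : ℚ_[p]))‖ ≤ ((p : ℝ) ^ 2)⁻¹ := by
  have hp3 : 3 ≤ p := odd_prime_three_le hp.out hodd
  have hj0 : (j : ℚ_[p]) ≠ 0 := Nat.cast_ne_zero.mpr (by omega)
  rw [norm_div, Padic.norm_p_pow]
  have hnormj : ‖(j : ℚ_[p])‖ = (p : ℝ) ^ (-(padicValNat p j : ℤ)) := by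
    rw [Padic.norm_eq_zpow_neg_valuation hj0, Padic.valuation_natCast]
  rw [hnormj]
  have hpR : (1 : ℝ) < (p : ℝ) := by exact_mod_cast hp.out.one_lt
  rw [← zpow_sub₀ (by positivity)]
  have h2 : ((p:ℝ)^2)⁻¹ = (p:ℝ) ^ (-2 : ℤ) := by
    rw [zpow_neg, ← zpow_natCast (p:ℝ) 2]
    norm_num
  rw [h2]
  apply zpow_le_zpow_right₀ hpR.le
  have := padicValNat_le_sub_two hp3 hj
  omega

lemma faulhaber_split (p N : ℕ) (hN : 1 ≤ N) :
    (p : ℚ) * bernoulli N = (∑ k ∈ range p, (k : ℚ) ^ N) -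
      ∑ i ∈ range N, bernoulli i * (N.choose i) * (p : ℚ) ^ (N + 1 - i) / ((N + 1 - i : ℕ) : ℚ) := by
  have h := sum_range_pow p N
  rw [Finset.sum_range_succ] at h
  have hlast : (bernoulli N) * ((N+1).choose N : ℚ) * (p:ℚ) ^ (N + 1 - N) / (N+1)
      = (p : ℚ) * bernoulli N := by
    rw [Nat.choose_succ_self_right, Nat.add_sub_cancel_left, pow_one]
    have : ((N:ℚ)+1) ≠ 0 := by positivity
    push_cast
    field_simp
  rw [hlast] at h
  have hterms : ∀ i ∈ range N,
      bernoulli i * ((N+1).choose i : ℚ) * (p:ℚ) ^ (N + 1 - i) / (N+1)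
      = bernoulli i * (N.choose i) * (p : ℚ) ^ (N + 1 - i) / ((N + 1 - i : ℕ) : ℚ) := by
    intro i hi
    simp only [mem_range] at hi
    have hid := Nat.choose_mul_succ_eq N i
    have hidQ : (N.choose i : ℚ) * ((N:ℚ)+1) = ((N+1).choose i : ℚ) * ((N + 1 - i : ℕ) : ℚ) := by
      exact_mod_cast congrArg (fun x : ℕ => (x : ℚ)) hid
    have h1 : ((N:ℚ)+1) ≠ 0 := by positivity
    have h2 : ((N + 1 - i : ℕ) : ℚ) ≠ 0 := Nat.cast_ne_zero.mpr (by omega)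
    rw [div_eq_div_iff h1 h2]
    have hre : bernoulli i * ((N+1).choose i : ℚ) * (p:ℚ)^(N+1-i) * ((N+1-i : ℕ) : ℚ)
        = bernoulli i * (p:ℚ)^(N+1-i) * (((N+1).choose i : ℚ) * ((N+1-i : ℕ) : ℚ)) := by ring
    rw [hre, ← hidQ]
    ring
  rw [Finset.sum_congr rfl hterms] at h
  linarith [h]

/-- Faulhaber identity, cast into `ℚ_[p]`. -/
lemma faulhaber_split_padic (p N : ℕ) [Fact p.Prime] (hN : 1 ≤ N) :
    (p : ℚ_[p]) * (bernoulli N : ℚ_[p]) = (∑ k ∈ range p, (k : ℚ_[p]) ^ N) -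
      ∑ i ∈ range N, (bernoulli i : ℚ_[p]) * (N.choose i : ℚ_[p]) * (p : ℚ_[p]) ^ (N + 1 - i)
        / ((N + 1 - i : ℕ) : ℚ_[p]) := by
  have h := congrArg (fun q : ℚ => (q : ℚ_[p])) (faulhaber_split p N hN)
  simp only [Rat.cast_mul, Rat.cast_sub, Rat.cast_sum, Rat.cast_div, Rat.cast_pow,
    Rat.cast_natCast] at h
  exact h

lemma norm_nat_le_one (p : ℕ) [Fact p.Prime] (n : ℕ) : ‖(n : ℚ_[p])‖ ≤ 1 := by
  have := Padic.norm_int_le_one (p := p) (n : ℤ)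
  push_cast at this
  exact this

lemma norm_nat_le_inv_of_dvd (p : ℕ) [hp : Fact p.Prime] {n : ℕ} (h : p ∣ n) :
    ‖(n : ℚ_[p])‖ ≤ (p : ℝ)⁻¹ := by
  obtain ⟨c, rfl⟩ := h
  push_cast
  rw [norm_mul, Padic.norm_p]
  have h1 : (0:ℝ) ≤ (p:ℝ)⁻¹ := by positivity
  calc (p:ℝ)⁻¹ * ‖(c : ℚ_[p])‖ ≤ (p:ℝ)⁻¹ * 1 := by
        exact mul_le_mul_of_nonneg_left (norm_nat_le_one p c) h1
    _ = (p:ℝ)⁻¹ := mul_one _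

/-- Bound on the "tail" sum. -/
lemma tail_norm_le (p N : ℕ) [hp : Fact p.Prime] (hodd : p ≠ 2)
    (hB : ∀ i < N, ‖(bernoulli i : ℚ_[p])‖ ≤ (p : ℝ)) :
    ‖∑ i ∈ range N, (bernoulli i : ℚ_[p]) * (N.choose i : ℚ_[p]) * (p : ℚ_[p]) ^ (N + 1 - i)
        / ((N + 1 - i : ℕ) : ℚ_[p])‖ ≤ (p : ℝ)⁻¹ := by
  have hp0 : (0:ℝ) < p := by exact_mod_cast hp.out.pos
  apply IsUltrametricDist.norm_sum_le_of_forall_le_of_nonneg (by positivity)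
  intro i hi
  simp only [mem_range] at hi
  have hj : 2 ≤ N + 1 - i := by omega
  have heq : (bernoulli i : ℚ_[p]) * (N.choose i : ℚ_[p]) * (p : ℚ_[p]) ^ (N + 1 - i)
      / ((N + 1 - i : ℕ) : ℚ_[p]) = (bernoulli i : ℚ_[p]) * (N.choose i : ℚ_[p]) *
      ((p : ℚ_[p]) ^ (N + 1 - i) / ((N + 1 - i : ℕ) : ℚ_[p])) := by ring
  rw [heq, norm_mul, norm_mul]
  have ha := hB i hi
  have hb := norm_nat_le_one p (N.choose i)
  have hc := norm_ppow_div_le p hodd (N + 1 - i) hj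
  have hfin : (p:ℝ) * 1 * (((p:ℝ)^2)⁻¹) = (p:ℝ)⁻¹ := by
    field_simp
  rw [← hfin]
  apply mul_le_mul _ hc (norm_nonneg _) (by positivity)
  exact mul_le_mul ha hb (norm_nonneg _) (by positivity)

lemma bernoulli_norm_le (p : ℕ) [hp : Fact p.Prime] (hodd : p ≠ 2) (N : ℕ) :
    ‖(bernoulli N : ℚ_[p])‖ ≤ (p : ℝ) := by
  induction N using Nat.strong_induction_on with
  | _ N IH =>
    have hp1 : (1:ℝ) ≤ (p:ℝ) := by exact_mod_cast hp.out.one_le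
    rcases Nat.eq_zero_or_pos N with rfl | hN
    · rw [bernoulli_zero, Rat.cast_one, norm_one]; exact hp1
    · have h := faulhaber_split_padic p N hN
      have hS : ‖∑ k ∈ range p, (k : ℚ_[p]) ^ N‖ ≤ 1 := by
        apply IsUltrametricDist.norm_sum_le_of_forall_le_of_nonneg zero_le_one
        intro k _
        rw [norm_pow]
        exact pow_le_one₀ (norm_nonneg _) (norm_nat_le_one p k)
      have hT := tail_norm_le p N hodd (fun i hi => IH i hi)
      have hmain : ‖(p : ℚ_[p]) * (bernoulli N : ℚ_[p])‖ ≤ 1 := by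
        rw [h, sub_eq_add_neg]
        refine le_trans (Padic.nonarchimedean _ _) ?_
        rw [norm_neg]
        apply max_le hS
        calc _ ≤ (p:ℝ)⁻¹ := hT
          _ ≤ 1 := inv_le_one_of_one_le₀ hp1
      rw [norm_mul, Padic.norm_p] at hmain
      have hp0 : (0:ℝ) < (p:ℝ) := by positivity
      calc ‖(bernoulli N : ℚ_[p])‖ = (p:ℝ) * ((p:ℝ)⁻¹ * ‖(bernoulli N : ℚ_[p])‖) := by
            field_simp
        _ ≤ (p:ℝ) * 1 := by exact mul_le_mul_of_nonneg_left hmain hp0.le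
        _ = (p:ℝ) := mul_one _

lemma sum_pow_mod (p N : ℕ) [hp : Fact p.Prime] (hN : 1 ≤ N) (hd : (p - 1) ∣ N) :
    p ∣ (∑ k ∈ range p, k ^ N) + 1 := by
  rw [← ZMod.natCast_eq_zero_iff]
  push_cast
  have h0 := Finset.sum_range_succ' (fun k => (k : ZMod p)^N) (p-1)
  have hp1 : p - 1 + 1 = p := by have := (Fact.out : p.Prime).one_lt; omega
  rw [hp1] at h0
  push_cast at h0 ⊢
  rw [h0, zero_pow (by omega)]
  have h1 : ∀ k ∈ range (p-1), ((k:ZMod p) + 1) ^ N = 1 := by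
    intro k hk
    simp only [mem_range] at hk
    have hne : ((k:ZMod p) + 1) ≠ 0 := by
      have h2 : (((k+1 : ℕ)) : ZMod p) ≠ 0 := by
        rw [Ne, ZMod.natCast_eq_zero_iff]
        intro hdvd
        have := Nat.le_of_dvd (by omega) hdvd
        omega
      push_cast at h2; exact h2
    obtain ⟨c, rfl⟩ := hd
    rw [pow_mul, ZMod.pow_card_sub_one_eq_one hne, one_pow]
  rw [Finset.sum_congr rfl h1]
  simp only [Finset.sum_const, card_range, nsmul_eq_mul, mul_one, add_zero]
  have hcast : ((p - 1 : ℕ) : ZMod p) = (p : ZMod p) - 1 := by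
    have := hp.out.one_lt
    push_cast [Nat.cast_sub (by omega : 1 ≤ p)]
    ring
  rw [hcast, ZMod.natCast_self]
  ring

/-- One direction of von Staudt–Clausen: if `p` is an odd prime with `p - 1 ∣ N`, `1 ≤ N`,
then `p` divides the denominator of `bernoulli N`. -/
lemma prime_dvd_bernoulli_den (p : ℕ) [hp : Fact p.Prime] (hodd : p ≠ 2) (N : ℕ)
    (hN : 1 ≤ N) (hdvd : (p - 1) ∣ N) : p ∣ (bernoulli N).den := by
  have hp1 : (1:ℝ) < (p:ℝ) := by exact_mod_cast hp.out.one_lt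
  have hp0 : (0:ℝ) < (p:ℝ) := by positivity
  have h := faulhaber_split_padic p N hN
  -- S as natural number cast
  have hSnat : (∑ k ∈ range p, (k : ℚ_[p]) ^ N) = ((∑ k ∈ range p, k ^ N : ℕ) : ℚ_[p]) := by
    push_cast
    rfl
  have hS1 : ‖(∑ k ∈ range p, (k : ℚ_[p]) ^ N) + 1‖ ≤ (p:ℝ)⁻¹ := by
    rw [hSnat]
    have : ((∑ k ∈ range p, k ^ N : ℕ) : ℚ_[p]) + 1 = (((∑ k ∈ range p, k ^ N) + 1 : ℕ) : ℚ_[p]) := by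
      push_cast; ring
    rw [this]
    exact norm_nat_le_inv_of_dvd p (sum_pow_mod p N hN hdvd)
  have hT := tail_norm_le p N hodd (fun i _ => bernoulli_norm_le p hodd i)
  -- ‖p * B_N + 1‖ ≤ p⁻¹
  have hkey : ‖(p : ℚ_[p]) * (bernoulli N : ℚ_[p]) + 1‖ ≤ (p:ℝ)⁻¹ := by
    have heq : (p : ℚ_[p]) * (bernoulli N : ℚ_[p]) + 1
        = ((∑ k ∈ range p, (k : ℚ_[p]) ^ N) + 1) +
          (-(∑ i ∈ range N, (bernoulli i : ℚ_[p]) * (N.choose i : ℚ_[p]) *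
            (p : ℚ_[p]) ^ (N + 1 - i) / ((N + 1 - i : ℕ) : ℚ_[p]))) := by
      rw [h]; ring
    rw [heq]
    refine le_trans (Padic.nonarchimedean _ _) ?_
    rw [norm_neg]
    exact max_le hS1 hT
  -- hence ‖p * B_N‖ = 1
  have hlt1 : ‖(p : ℚ_[p]) * (bernoulli N : ℚ_[p]) + 1‖ < 1 := by
    calc _ ≤ (p:ℝ)⁻¹ := hkey
      _ < 1 := by rw [inv_lt_one_iff₀]; right; exact hp1
  have hnormpB : ‖(p : ℚ_[p]) * (bernoulli N : ℚ_[p])‖ = 1 := by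
    have hne : ‖(p : ℚ_[p]) * (bernoulli N : ℚ_[p]) + 1‖ ≠ ‖(-1 : ℚ_[p])‖ := by
      rw [norm_neg, norm_one]; exact ne_of_lt hlt1
    have := Padic.add_eq_max_of_ne hne
    have heq2 : ((p : ℚ_[p]) * (bernoulli N : ℚ_[p]) + 1) + (-1) = (p : ℚ_[p]) * (bernoulli N : ℚ_[p]) := by ring
    rw [heq2] at this
    rw [this, norm_neg, norm_one]
    exact max_eq_right hlt1.le
  have hnormB : ‖(bernoulli N : ℚ_[p])‖ = (p:ℝ) := by
    rw [norm_mul, Padic.norm_p] at hnormpB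
    have h2 := congrArg (fun x : ℝ => (p:ℝ) * x) hnormpB
    rw [← mul_assoc, mul_inv_cancel₀ (ne_of_gt hp0), one_mul, mul_one] at h2
    exact h2
  by_contra hnd
  have hle1 : ‖(bernoulli N : ℚ_[p])‖ ≤ 1 := by
    have hq : (bernoulli N : ℚ_[p]) = ((bernoulli N).num : ℚ_[p]) / ((bernoulli N).den : ℚ_[p]) := by
      rw [← Rat.num_div_den (bernoulli N)]
      push_cast
      rw [Rat.num_div_den]
    rw [hq, norm_div]
    have hden1 : ‖(((bernoulli N).den : ℕ) : ℚ_[p])‖ = 1 := by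
      have hle := norm_nat_le_one p (bernoulli N).den
      have hnlt : ¬ ‖(((bernoulli N).den : ℤ) : ℚ_[p])‖ < 1 := by
        rw [Padic.norm_intCast_lt_one_iff]
        exact_mod_cast hnd
      push_cast at hnlt
      push_cast
      linarith [not_lt.mp hnlt]
    push_cast at hden1 ⊢
    rw [hden1, div_one]
    exact Padic.norm_int_le_one _
  rw [hnormB] at hle1
  linarith


lemma den_prime (m : ℕ) (hm : 0 < m) (h : (bernoulli (12*m)).den = 2730)
    {r : ℕ} (hr : r.Prime) (hodd : r ≠ 2) (hdvd : (r-1) ∣ 12*m) : r ∣ 2730 := by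
  haveI : Fact r.Prime := ⟨hr⟩
  rw [← h]
  exact prime_dvd_bernoulli_den r hodd (12*m) (by omega) hdvd

theorem toda_of_bernoulli_2730 (m : ℕ) (hm : 0 < m)
    (h : (bernoulli (12 * m)).den = 2730) : TodaSet (3 * m) = {5, 7, 13} := by
  have h5 : ¬ 5 ∣ m := by
    rintro ⟨k, rfl⟩
    have h11 : (11:ℕ) ∣ 2730 := by
      refine den_prime _ hm h (by norm_num) (by norm_num) ⟨6*k, by ring⟩
    norm_num at h11
  have h7 : ¬ 7 ∣ m := by
    rintro ⟨k, rfl⟩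
    have h29 : (29:ℕ) ∣ 2730 := by
      refine den_prime _ hm h (by norm_num) (by norm_num) ⟨3*k, by ring⟩
    norm_num at h29
  have h13 : ¬ 13 ∣ m := by
    rintro ⟨k, rfl⟩
    have h53 : (53:ℕ) ∣ 2730 := by
      refine den_prime _ hm h (by norm_num) (by norm_num) ⟨3*k, by ring⟩
    norm_num at h53
  have h12 : 4 * (3*m) = 12*m := by ring
  ext q
  simp only [TodaSet, IsTodaPrime, Set.mem_setOf_eq, Set.mem_insert_iff,
    Set.mem_singleton_iff]
  constructor
  · rintro ⟨hq, hoddq, hdvd, hgcd⟩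
    have hq2 : q ≠ 2 := by
      rintro rfl
      have := Nat.odd_iff.mp hoddq
      omega
    rw [h12] at hdvd hgcd
    have hd2730 : q ∣ 2730 := den_prime m hm h hq hq2 hdvd
    have hcases : q = 2 ∨ q = 3 ∨ q = 5 ∨ q = 7 ∨ q = 13 := by
      have h2730 : (2730:ℕ) = 2*(3*(5*(7*13))) := by norm_num
      rw [h2730] at hd2730
      rcases (Nat.Prime.dvd_mul hq).mp hd2730 with hx | hx
      · exact Or.inl ((Nat.prime_dvd_prime_iff_eq hq (by norm_num)).mp hx)
      rcases (Nat.Prime.dvd_mul hq).mp hx with hx | hx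
      · exact Or.inr (Or.inl ((Nat.prime_dvd_prime_iff_eq hq (by norm_num)).mp hx))
      rcases (Nat.Prime.dvd_mul hq).mp hx with hx | hx
      · exact Or.inr (Or.inr (Or.inl ((Nat.prime_dvd_prime_iff_eq hq (by norm_num)).mp hx)))
      rcases (Nat.Prime.dvd_mul hq).mp hx with hx | hx
      · exact Or.inr (Or.inr (Or.inr (Or.inl ((Nat.prime_dvd_prime_iff_eq hq (by norm_num)).mp hx))))
      · exact Or.inr (Or.inr (Or.inr (Or.inr ((Nat.prime_dvd_prime_iff_eq hq (by norm_num)).mp hx))))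
    rcases hcases with rfl | rfl | rfl | rfl | rfl
    · exact absurd rfl hq2
    · exfalso
      have hdiv : 12*m/(3-1) = 6*m := by omega
      rw [hdiv] at hgcd
      have hg : Nat.gcd 3 (6*m) = 3 := Nat.gcd_eq_left ⟨2*m, by ring⟩
      omega
    · exact Or.inl rfl
    · exact Or.inr (Or.inl rfl)
    · exact Or.inr (Or.inr rfl)
  · intro hq
    rcases hq with rfl | rfl | rfl
    · refine ⟨by norm_num, by decide, ?_, ?_⟩
      · rw [h12]; exact ⟨3*m, by ring⟩
      · rw [h12]
        have hdiv : 12*m/(5-1) = 3*m := by omega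
        rw [hdiv]
        refine (Nat.Prime.coprime_iff_not_dvd (by norm_num)).mpr ?_
        intro hd
        rcases (Nat.Prime.dvd_mul (by norm_num : Nat.Prime 5)).mp hd with hx | hx
        · norm_num at hx
        · exact h5 hx
    · refine ⟨by norm_num, by decide, ?_, ?_⟩
      · rw [h12]; exact ⟨2*m, by ring⟩
      · rw [h12]
        have hdiv : 12*m/(7-1) = 2*m := by omega
        rw [hdiv]
        refine (Nat.Prime.coprime_iff_not_dvd (by norm_num)).mpr ?_
        intro hd
        rcases (Nat.Prime.dvd_mul (by norm_num : Nat.Prime 7)).mp hd with hx | hx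
        · norm_num at hx
        · exact h7 hx
    · refine ⟨by norm_num, by decide, ?_, ?_⟩
      · rw [h12]; exact ⟨m, by ring⟩
      · rw [h12]
        have hdiv : 12*m/(13-1) = m := by omega
        rw [hdiv]
        exact (Nat.Prime.coprime_iff_not_dvd (by norm_num)).mpr h13
end

section
/- Let m be a positive integer. If the denominator of the Bernoulli number B_{20m} equals 330, then T(5m) = {3, 11}. -/
open Finset

lemma padicValNat_le_sub_two_s15 {p k : ℕ} [hp : Fact p.Prime] (h3 : 3 ≤ p) (hk : 2 ≤ k) :
    padicValNat p k ≤ k - 2 := by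
  by_contra hlt
  push_neg at hlt
  have hv : k - 1 ≤ padicValNat p k := by omega
  have hdvd : p ^ (k - 1) ∣ k := dvd_trans (pow_dvd_pow p hv) (pow_padicValNat_dvd)
  have h1 : p ^ (k - 1) ≤ k := Nat.le_of_dvd (by omega) hdvd
  have h2 : k ≤ 2 ^ (k - 1) := by
    have := Nat.lt_two_pow_self (n := k - 1)
    omega
  have h3' : 2 ^ (k - 1) < p ^ (k - 1) :=
    Nat.pow_lt_pow_left (by omega) (by omega)
  omega

lemma padicNorm_ppow_div {p : ℕ} [hp : Fact p.Prime] (h3 : 3 ≤ p) {k : ℕ} (hk : 2 ≤ k) :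
    padicNorm p ((p : ℚ) ^ (k - 1) / k) ≤ (p : ℚ)⁻¹ := by
  have hp1 : (1 : ℚ) < p := by exact_mod_cast by omega
  have hpq : (p : ℚ) ≠ 0 := by positivity
  have hkq : (k : ℚ) ≠ 0 := by exact_mod_cast by omega
  have hne : (p : ℚ) ^ (k - 1) / k ≠ 0 := by positivity
  rw [padicNorm.eq_zpow_of_nonzero hne, ← zpow_neg_one]
  apply zpow_le_zpow_right₀ hp1.le
  rw [padicValRat.div (pow_ne_zero _ hpq) hkq,
    padicValRat.pow, padicValRat.self (by omega), padicValRat.of_nat]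
  have := padicValNat_le_sub_two_s15 (p := p) h3 hk
  have : (padicValNat p k : ℤ) ≤ (k : ℤ) - 2 := by omega
  omega

lemma key (p : ℕ) [hp : Fact p.Prime] (h3 : 3 ≤ p) (N : ℕ) :
    padicNorm p ((p : ℚ) * bernoulli N) ≤ 1 ∧
      padicNorm p ((p : ℚ) * bernoulli N - ∑ k ∈ range p, (k : ℚ) ^ N) ≤ (p : ℚ)⁻¹ := by
  induction N using Nat.strong_induction_on with
  | _ N ih =>
  have hpq : (p : ℚ) ≠ 0 := by positivity
  have hpinv_nonneg : (0 : ℚ) ≤ (p : ℚ)⁻¹ := by positivity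
  have hpinv_le_one : (p : ℚ)⁻¹ ≤ 1 := by
    rw [inv_le_one_iff₀]; right; exact_mod_cast by omega
  have hsum := sum_range_pow p N
  rw [Finset.sum_range_succ] at hsum
  have hlast : bernoulli N * ((N + 1).choose N) * (p : ℚ) ^ (N + 1 - N) / (N + 1)
      = (p : ℚ) * bernoulli N := by
    rw [Nat.choose_succ_self_right]
    have : N + 1 - N = 1 := by omega
    rw [this, pow_one]
    have hN1 : ((N : ℚ) + 1) ≠ 0 := by positivity
    push_cast
    field_simp
  rw [hlast] at hsum
  -- hsum : ∑ k in range p, k^N = T + p * B_N  where T = ∑ i in range N, term i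
  have hterm : ∀ i ∈ range N,
      padicNorm p (bernoulli i * ((N + 1).choose i) * (p : ℚ) ^ (N + 1 - i) / (N + 1))
        ≤ (p : ℚ)⁻¹ := by
    intro i hi
    rw [mem_range] at hi
    set k := N + 1 - i with hk
    have hk2 : 2 ≤ k := by omega
    have hkq : (k : ℚ) ≠ 0 := by exact_mod_cast by omega
    have hN1 : ((N : ℚ) + 1) ≠ 0 := by positivity
    have hN1' : ((N + 1 : ℕ) : ℚ) ≠ 0 := by exact_mod_cast Nat.succ_ne_zero N
    have hchooseN : (N + 1).choose i * k = N.choose i * (N + 1) := by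
      have := Nat.choose_mul_succ_eq N i
      rw [hk]
      omega
    have hchoose : (((N + 1).choose i : ℕ) : ℚ) * (k : ℚ) = ((N.choose i : ℕ) : ℚ) * ((N : ℚ) + 1) := by
      exact_mod_cast congrArg (Nat.cast : ℕ → ℚ) hchooseN
    have heq : bernoulli i * ((N + 1).choose i) * (p : ℚ) ^ (N + 1 - i) / (N + 1)
        = (N.choose i : ℚ) * ((p : ℚ) * bernoulli i) * ((p : ℚ) ^ (k - 1) / k) := by
      have hpk : (p : ℚ) ^ (N + 1 - i) = (p : ℚ) * (p : ℚ) ^ (k - 1) := by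
        rw [← pow_succ']
        congr 1
        omega
      rw [hpk]
      field_simp
      linear_combination bernoulli i * hchoose
    rw [heq, padicNorm.mul, padicNorm.mul]
    calc padicNorm p (N.choose i : ℚ) * padicNorm p ((p : ℚ) * bernoulli i) *
          padicNorm p ((p : ℚ) ^ (k - 1) / k)
        ≤ 1 * 1 * (p : ℚ)⁻¹ := by
          apply mul_le_mul
          · apply mul_le_mul (padicNorm.of_nat _) ((ih i hi).1) (padicNorm.nonneg _) zero_le_one
          · exact padicNorm_ppow_div h3 hk2
          · exact padicNorm.nonneg _
          · norm_num
      _ = (p : ℚ)⁻¹ := by ring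
  have hT : padicNorm p (∑ i ∈ range N,
      bernoulli i * ((N + 1).choose i) * (p : ℚ) ^ (N + 1 - i) / (N + 1)) ≤ (p : ℚ)⁻¹ :=
    padicNorm.sum_le' hterm hpinv_nonneg
  have hdiff : padicNorm p ((p : ℚ) * bernoulli N - ∑ k ∈ range p, (k : ℚ) ^ N) ≤ (p : ℚ)⁻¹ := by
    have : (p : ℚ) * bernoulli N - ∑ k ∈ range p, (k : ℚ) ^ N
        = -(∑ i ∈ range N, bernoulli i * ((N + 1).choose i) * (p : ℚ) ^ (N + 1 - i) / (N + 1)) := by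
      rw [hsum]; ring
    rw [this, padicNorm.neg]
    exact hT
  refine ⟨?_, hdiff⟩
  have hS : padicNorm p (∑ k ∈ range p, (k : ℚ) ^ N) ≤ 1 := by
    have : (∑ k ∈ range p, (k : ℚ) ^ N) = ((∑ k ∈ range p, k ^ N : ℕ) : ℚ) := by push_cast; ring
    rw [this]
    exact padicNorm.of_nat _
  calc padicNorm p ((p : ℚ) * bernoulli N)
      = padicNorm p (((p : ℚ) * bernoulli N - ∑ k ∈ range p, (k : ℚ) ^ N)
          + ∑ k ∈ range p, (k : ℚ) ^ N) := by ring_nf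
    _ ≤ max (padicNorm p ((p : ℚ) * bernoulli N - ∑ k ∈ range p, (k : ℚ) ^ N))
          (padicNorm p (∑ k ∈ range p, (k : ℚ) ^ N)) := padicNorm.nonarchimedean
    _ ≤ 1 := max_le (le_trans hdiff hpinv_le_one) hS

lemma dvd_bernoulli_den (p N : ℕ) [hp : Fact p.Prime] (h3 : 3 ≤ p) (hN : 0 < N)
    (hdvd : (p - 1) ∣ N) : p ∣ (bernoulli N).den := by
  have hpq : (p : ℚ) ≠ 0 := by positivity
  -- the sum S is ≡ -1 mod p
  have hndvd : ¬ p ∣ (∑ k ∈ range p, k ^ N) := by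
    intro hdv
    have : ((∑ k ∈ range p, k ^ N : ℕ) : ZMod p) = 0 := by
      exact_mod_cast (ZMod.natCast_eq_zero_iff _ _).mpr hdv
    rw [Nat.cast_sum] at this
    have heach : ∀ k ∈ range p, ((k ^ N : ℕ) : ZMod p) = if k = 0 then 0 else 1 := by
      intro k hk
      rw [mem_range] at hk
      by_cases h0 : k = 0
      · subst h0
        rw [if_pos rfl, zero_pow hN.ne', Nat.cast_zero]
      · push_cast
        have hknz : (k : ZMod p) ≠ 0 := by
          rw [Ne, ZMod.natCast_eq_zero_iff]
          intro hd
          have := Nat.le_of_dvd (Nat.pos_of_ne_zero h0) hd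
          omega
        obtain ⟨c, hc⟩ := hdvd
        rw [hc, pow_mul, ZMod.pow_card_sub_one_eq_one hknz, one_pow, if_neg h0]
    rw [Finset.sum_congr rfl heach] at this
    have hrange : range p = insert 0 (Ico 1 p) := by
      ext x
      simp only [mem_range, mem_insert, mem_Ico]
      omega
    rw [hrange, Finset.sum_insert (by simp), if_pos rfl, zero_add] at this
    have hones : ∑ x ∈ Ico 1 p, (if x = 0 then (0 : ZMod p) else 1) = ((p - 1 : ℕ) : ZMod p) := by
      rw [Finset.sum_congr rfl (fun x hx => if_neg (by rw [mem_Ico] at hx; omega)),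
        Finset.sum_const, Nat.card_Ico, nsmul_eq_mul, mul_one]
    rw [hones, ZMod.natCast_eq_zero_iff] at this
    have := Nat.le_of_dvd (by omega) this
    omega
  -- now apply the key estimate
  have hp1 : (1 : ℚ) < p := by exact_mod_cast by omega
  obtain ⟨hk1, hk2⟩ := key p h3 N
  have hScast : (∑ k ∈ range p, (k : ℚ) ^ N) = ((∑ k ∈ range p, k ^ N : ℕ) : ℚ) := by
    push_cast; ring
  have hS1 : padicNorm p (∑ k ∈ range p, (k : ℚ) ^ N) = 1 := by
    rw [hScast]
    exact (padicNorm.nat_eq_one_iff _).mpr hndvd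
  have hlt : padicNorm p ((p : ℚ) * bernoulli N - ∑ k ∈ range p, (k : ℚ) ^ N)
      < padicNorm p (∑ k ∈ range p, (k : ℚ) ^ N) := by
    rw [hS1]
    exact lt_of_le_of_lt hk2 (by rw [inv_lt_one_iff₀]; right; exact hp1)
  have hpBN : padicNorm p ((p : ℚ) * bernoulli N) = 1 := by
    have heq : (p : ℚ) * bernoulli N
        = ((p : ℚ) * bernoulli N - ∑ k ∈ range p, (k : ℚ) ^ N) + ∑ k ∈ range p, (k : ℚ) ^ N := by
      ring
    rw [heq, padicNorm.add_eq_max_of_ne (ne_of_lt hlt), max_eq_right hlt.le, hS1]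
  have hBN : padicNorm p (bernoulli N) = p := by
    rw [padicNorm.mul, padicNorm.padicNorm_p_of_prime] at hpBN
    field_simp at hpBN
    exact hpBN
  have hBne : bernoulli N ≠ 0 := by
    intro h0
    rw [h0, padicNorm.zero] at hBN
    exact absurd hBN.symm (by positivity)
  have hv : padicValRat p (bernoulli N) < 0 := by
    by_contra hge
    push_neg at hge
    have := padicNorm.eq_zpow_of_nonzero (p := p) hBne
    rw [hBN] at this
    have hle : ((p : ℚ) ^ (-padicValRat p (bernoulli N)) : ℚ) ≤ (p : ℚ) ^ (0 : ℤ) :=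
      zpow_le_zpow_right₀ hp1.le (by omega)
    rw [← this, zpow_zero] at hle
    linarith
  rw [padicValRat_def] at hv
  have hden : 1 ≤ padicValNat p (bernoulli N).den := by omega
  exact dvd_of_one_le_padicValNat hden

lemma q_dvd_330 (m : ℕ) (h : (bernoulli (20 * m)).den = 330) {q : ℕ} (hq : q.Prime)
    (h3 : 3 ≤ q) (hm : 0 < m) (hd : (q - 1) ∣ 20 * m) : q ∣ 330 := by
  haveI : Fact q.Prime := ⟨hq⟩
  have := dvd_bernoulli_den q (20 * m) h3 (by positivity) hd
  rwa [h] at this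

theorem toda_of_bernoulli_330 (m : ℕ) (hm : 0 < m)
    (h : (bernoulli (20 * m)).den = 330) : TodaSet (5 * m) = {3, 11} := by
  have h3m : ¬ 3 ∣ m := by
    rintro ⟨k, rfl⟩
    have : (7 : ℕ) ∣ 330 := q_dvd_330 _ h (by norm_num) (by norm_num) hm ⟨10 * k, by ring⟩
    norm_num at this
  have h11m : ¬ 11 ∣ m := by
    rintro ⟨k, rfl⟩
    have : (23 : ℕ) ∣ 330 := q_dvd_330 _ h (by norm_num) (by norm_num) hm ⟨10 * k, by ring⟩
    norm_num at this
  ext q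
  simp only [TodaSet, Set.mem_setOf_eq, Set.mem_insert_iff, Set.mem_singleton_iff]
  constructor
  · rintro ⟨hq, hodd, hdvd, hgcd⟩
    have hq2 : q ≠ 2 := by
      have := Nat.odd_iff.mp hodd; omega
    by_contra hq311
    push_neg at hq311
    obtain ⟨hq3, hq11⟩ := hq311
    have hq5 : q ≠ 5 := by
      rintro rfl
      have h45 : 4 * (5 * m) / (5 - 1) = 5 * m := by omega
      rw [h45] at hgcd
      have : Nat.gcd 5 (5 * m) = 5 := Nat.gcd_eq_left ⟨m, rfl⟩
      omega
    have h3q : 3 ≤ q := by have := hq.two_le; omega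
    have hdvd' : (q - 1) ∣ 20 * m := by
      have h20 : 4 * (5 * m) = 20 * m := by ring
      rwa [h20] at hdvd
    have hdv330 := q_dvd_330 m h hq h3q hm hdvd'
    rw [show (330 : ℕ) = 2 * (3 * (5 * 11)) by norm_num] at hdv330
    rcases (hq.dvd_mul).mp hdv330 with hd | hd
    · exact hq2 ((Nat.prime_dvd_prime_iff_eq hq (by norm_num)).mp hd)
    rcases (hq.dvd_mul).mp hd with hd | hd
    · exact hq3 ((Nat.prime_dvd_prime_iff_eq hq (by norm_num)).mp hd)
    rcases (hq.dvd_mul).mp hd with hd | hd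
    · exact hq5 ((Nat.prime_dvd_prime_iff_eq hq (by norm_num)).mp hd)
    · exact hq11 ((Nat.prime_dvd_prime_iff_eq hq (by norm_num)).mp hd)
  · rintro (rfl | rfl)
    · refine ⟨by norm_num, ⟨1, by norm_num⟩, ⟨10 * m, by ring⟩, ?_⟩
      rw [show 4 * (5 * m) / (3 - 1) = 10 * m by omega]
      refine (Nat.Prime.coprime_iff_not_dvd (by norm_num)).mpr fun hd => ?_
      rcases (Nat.Prime.dvd_mul (by norm_num)).mp hd with hd' | hd'
      · norm_num at hd'
      · exact h3m hd'
    · refine ⟨by norm_num, ⟨5, by norm_num⟩, ⟨2 * m, by ring⟩, ?_⟩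
      rw [show 4 * (5 * m) / (11 - 1) = 2 * m by omega]
      refine (Nat.Prime.coprime_iff_not_dvd (by norm_num)).mpr fun hd => ?_
      rcases (Nat.Prime.dvd_mul (by norm_num)).mp hd with hd' | hd'
      · norm_num at hd'
      · exact h11m hd'
end

section
/- Let a be a positive integer and p ∈ T(a) with p > 5. For any positive integer m divisible by p: if p does not divide a and q = 2pi+1 is prime for some divisor i of 2a, then q - 1 divides 4am but q - 1 does not divide 4a; consequently the denominator of B_{4am} is strictly greater than the denominator of B_{4a}. -/
namespace TodaAux

open Finset

variable {p : ℕ} [hp : Fact p.Prime]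

lemma norm_p_pow_div (jj j : ℕ) (hj : 0 < j) :
    padicNorm p ((p : ℚ) ^ jj / j) = (p : ℚ) ^ ((padicValNat p j : ℤ) - jj) := by
  have hp1 : (1 : ℚ) < p := by exact_mod_cast hp.out.one_lt
  have hp0 : (p : ℚ) ≠ 0 := by positivity
  have hj0 : (j : ℚ) ≠ 0 := by exact_mod_cast hj.ne'
  have hne : (p : ℚ) ^ jj / j ≠ 0 := by positivity
  rw [padicNorm.eq_zpow_of_nonzero hne]
  rw [padicValRat.div (pow_ne_zero _ hp0) hj0, padicValRat.pow _,
    padicValRat.self hp.out.one_lt, ← padicValRat_of_nat]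
  ring_nf

lemma norm_p_pow_div_le (j : ℕ) (hj : 0 < j) :
    padicNorm p ((p : ℚ) ^ j / j) ≤ (p : ℚ)⁻¹ := by
  have hp1 : (1 : ℚ) < p := by exact_mod_cast hp.out.one_lt
  rw [norm_p_pow_div j j hj, ← zpow_neg_one]
  apply zpow_le_zpow_right₀ hp1.le
  have h1 : p ^ padicValNat p j ∣ j := pow_padicValNat_dvd
  have h2 : p ^ padicValNat p j ≤ j := Nat.le_of_dvd hj h1
  have h3 : padicValNat p j < 2 ^ padicValNat p j := Nat.lt_two_pow_self
  have h4 : 2 ^ padicValNat p j ≤ p ^ padicValNat p j :=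
    Nat.pow_le_pow_left hp.out.two_le _
  omega

lemma two_pow_ge (v : ℕ) (hv : 2 ≤ v) : v + 2 ≤ 2 ^ v := by
  induction v with
  | zero => omega
  | succ n ih =>
    rcases Nat.lt_or_ge n 2 with h | h
    · interval_cases n
      · omega
      · norm_num
    · have := ih (by omega)
      have : 2 ^ n ≥ 1 := Nat.one_le_two_pow
      calc n + 1 + 2 ≤ 2 ^ n + 2 ^ n := by omega
        _ = 2 ^ (n + 1) := by ring

lemma norm_p_pow_pred_div_le (j : ℕ) (hj : 2 ≤ j) (hex : p ≠ 2 ∨ j ≠ 2) :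
    padicNorm p ((p : ℚ) ^ (j - 1) / j) ≤ (p : ℚ)⁻¹ := by
  have hp1 : (1 : ℚ) < p := by exact_mod_cast hp.out.one_lt
  rw [norm_p_pow_div (j - 1) j (by omega), ← zpow_neg_one]
  apply zpow_le_zpow_right₀ hp1.le
  -- suffices: padicValNat p j + 2 ≤ j
  have key : padicValNat p j + 2 ≤ j := by
    set v := padicValNat p j with hv
    have h1 : p ^ v ∣ j := pow_padicValNat_dvd
    have h2 : p ^ v ≤ j := Nat.le_of_dvd (by omega) h1
    rcases Nat.lt_or_ge v 1 with h | h
    · omega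
    rcases Nat.lt_or_ge v 2 with h' | h'
    · have hv1 : v = 1 := by omega
      have hpj : p ∣ j := by rw [← pow_one p]; rw [← hv1]; exact h1
      rcases eq_or_ne p 2 with rfl | hne
      · have hj2 : j ≠ 2 := by tauto
        have : 2 ∣ j := hpj
        omega
      · have hp3 : 3 ≤ p := by have := hp.out.two_le; omega
        have := Nat.le_of_dvd (by omega) hpj
        omega
    · have h3 := two_pow_ge v h'
      have h4 : 2 ^ v ≤ p ^ v := Nat.pow_le_pow_left hp.out.two_le _
      omega
  omega

/-- The key identity from Faulhaber's theorem with `n = p`. -/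
lemma bernoulli_identity (m : ℕ) :
    bernoulli m * p = (∑ k ∈ range p, (k : ℚ) ^ m)
      - ∑ i ∈ range m, bernoulli i * (m.choose i) *
          ((p : ℚ) ^ (m + 1 - i) / ((m + 1 - i : ℕ) : ℚ)) := by
  have h := sum_range_pow p m
  rw [Finset.sum_range_succ] at h
  have hm1 : ((m : ℚ) + 1) ≠ 0 := by positivity
  have hlast : bernoulli m * ((m + 1).choose m) * (p : ℚ) ^ (m + 1 - m) / (m + 1)
      = bernoulli m * p := by
    rw [Nat.choose_succ_self_right, Nat.add_sub_cancel_left, pow_one]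
    push_cast
    field_simp
  rw [hlast] at h
  have hsum : ∀ i ∈ range m,
      bernoulli i * ((m + 1).choose i) * (p : ℚ) ^ (m + 1 - i) / (m + 1)
        = bernoulli i * (m.choose i) * ((p : ℚ) ^ (m + 1 - i) / ((m + 1 - i : ℕ) : ℚ)) := by
    intro i hi
    rw [Finset.mem_range] at hi
    have hsub : (0 : ℚ) < ((m + 1 - i : ℕ) : ℚ) := by
      have : 0 < m + 1 - i := by omega
      exact_mod_cast this
    have hchoose : (m.choose i : ℚ) * (m + 1) = ((m + 1).choose i : ℚ) * ((m + 1 - i : ℕ) : ℚ) := by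
      exact_mod_cast congrArg (Nat.cast : ℕ → ℚ) (Nat.choose_mul_succ_eq m i)
    field_simp
    linear_combination (-(bernoulli i * (p : ℚ) ^ (m + 1 - i))) * hchoose
  rw [Finset.sum_congr rfl hsum] at h
  linarith [h]

lemma norm_bernoulli_le (n : ℕ) : padicNorm p (bernoulli n) ≤ p := by
  induction n using Nat.strong_induction_on with
  | _ m IH =>
    have hp1 : (1 : ℚ) < p := by exact_mod_cast hp.out.one_lt
    have hp0 : (0 : ℚ) < p := by positivity
    have h1 : padicNorm p (bernoulli m * p) ≤ 1 := by
      rw [bernoulli_identity]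
      refine le_trans padicNorm.sub (max_le ?_ ?_)
      · refine padicNorm.sum_le' (fun k _ => ?_) zero_le_one
        have : ((k : ℚ) ^ m) = ((k ^ m : ℕ) : ℚ) := by push_cast; ring
        rw [this]
        exact padicNorm.of_nat _
      · refine padicNorm.sum_le' (fun i hi => ?_) zero_le_one
        rw [Finset.mem_range] at hi
        rw [padicNorm.mul, padicNorm.mul]
        have hB := IH i hi
        have hC : padicNorm p ((m.choose i : ℕ) : ℚ) ≤ 1 := padicNorm.of_nat _
        have hT : padicNorm p ((p : ℚ) ^ (m + 1 - i) / ((m + 1 - i : ℕ) : ℚ)) ≤ (p : ℚ)⁻¹ :=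
          norm_p_pow_div_le (m + 1 - i) (by omega)
        calc padicNorm p (bernoulli i) * padicNorm p ((m.choose i : ℕ) : ℚ) *
              padicNorm p ((p : ℚ) ^ (m + 1 - i) / ((m + 1 - i : ℕ) : ℚ))
            ≤ (p : ℚ) * 1 * (p : ℚ)⁻¹ := by
              gcongr <;> first
                | exact padicNorm.nonneg _
                | exact mul_nonneg (padicNorm.nonneg _) (padicNorm.nonneg _)
                | assumption
          _ = 1 := by field_simp
    rw [padicNorm.mul, padicNorm.padicNorm_p_of_prime] at h1
    calc padicNorm p (bernoulli m) = padicNorm p (bernoulli m) * (p : ℚ)⁻¹ * p := by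
          field_simp
      _ ≤ 1 * p := by gcongr
      _ = p := one_mul _

lemma zmod_sum_range (m : ℕ) :
    (∑ k ∈ range p, ((k : ZMod p)) ^ m) = ∑ x : ZMod p, x ^ m := by
  haveI : NeZero p := ⟨hp.out.ne_zero⟩
  refine Finset.sum_nbij' (fun k => (k : ZMod p)) (fun x => x.val) ?_ ?_ ?_ ?_ ?_
  · intro a _; exact Finset.mem_univ _
  · intro x _
    rw [Finset.mem_range]
    exact ZMod.val_lt x
  · intro a ha
    rw [Finset.mem_range] at ha
    exact ZMod.val_cast_of_lt ha
  · intro x _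
    exact ZMod.natCast_zmod_val x
  · intro a _; rfl

lemma sum_pow_zmod (m : ℕ) (hm : 0 < m) :
    ((∑ k ∈ range p, k ^ m : ℕ) : ZMod p) = if (p - 1) ∣ m then -1 else 0 := by
  classical
  haveI : NeZero p := ⟨hp.out.ne_zero⟩
  have h1 : ((∑ k ∈ range p, k ^ m : ℕ) : ZMod p) = ∑ x : ZMod p, x ^ m := by
    push_cast
    exact zmod_sum_range m
  rw [h1]
  -- separate the zero term
  let φ : (ZMod p)ˣ ↪ ZMod p := ⟨fun x => (x : ZMod p), Units.val_injective⟩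
  have hmap : Finset.univ.map φ = Finset.univ \ {0} := by
    ext x
    simp only [Finset.mem_map, Finset.mem_univ, Function.Embedding.coeFn_mk, true_and,
      Finset.mem_sdiff, Finset.mem_singleton, φ]
    constructor
    · rintro ⟨y, rfl⟩
      exact y.ne_zero
    · intro hx
      exact ⟨Units.mk0 x hx, rfl⟩
  have h2 : (∑ x : ZMod p, x ^ m) = ∑ x ∈ Finset.univ \ {(0 : ZMod p)}, x ^ m := by
    rw [← Finset.sum_sdiff (Finset.subset_univ {(0 : ZMod p)}), Finset.sum_singleton,
      zero_pow hm.ne', add_zero]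
  have h3 : (∑ x ∈ Finset.univ \ {(0 : ZMod p)}, x ^ m) = ∑ x : (ZMod p)ˣ, ((x : ZMod p)) ^ m := by
    rw [← hmap, Finset.sum_map]
    rfl
  rw [h2, h3]
  have := FiniteField.sum_pow_units (ZMod p) m
  rwa [ZMod.card] at this

lemma norm_bernoulli_sub (m : ℕ) (hm : 0 < m) (hme : Even m) :
    padicNorm p (bernoulli m - ((∑ k ∈ range p, k ^ m : ℕ) : ℚ) / p) ≤ 1 := by
  have hp1 : (1 : ℚ) < p := by exact_mod_cast hp.out.one_lt
  have hpq : (p : ℚ) ≠ 0 := by positivity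
  have key := bernoulli_identity (p := p) m
  have hS : ((∑ k ∈ range p, k ^ m : ℕ) : ℚ) = ∑ k ∈ range p, (k : ℚ) ^ m := by
    push_cast; rfl
  have hdiff : bernoulli m - ((∑ k ∈ range p, k ^ m : ℕ) : ℚ) / p
      = -∑ i ∈ range m, bernoulli i * (m.choose i) *
          ((p : ℚ) ^ (m - i) / ((m + 1 - i : ℕ) : ℚ)) := by
    rw [hS]
    have hterm : ∀ i ∈ range m,
        bernoulli i * (m.choose i) * ((p : ℚ) ^ (m + 1 - i) / ((m + 1 - i : ℕ) : ℚ))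
          = (bernoulli i * (m.choose i) * ((p : ℚ) ^ (m - i) / ((m + 1 - i : ℕ) : ℚ))) * p := by
      intro i hi
      rw [Finset.mem_range] at hi
      have he : m + 1 - i = (m - i) + 1 := by omega
      rw [he, pow_succ]
      ring
    rw [Finset.sum_congr rfl hterm, ← Finset.sum_mul] at key
    field_simp at key ⊢
    linarith [key]
  rw [hdiff, padicNorm.neg]
  refine padicNorm.sum_le' (fun i hi => ?_) zero_le_one
  rw [Finset.mem_range] at hi
  by_cases hsp : p = 2 ∧ i = m - 1
  · obtain ⟨hp2, hi2⟩ := hsp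
    subst hp2
    subst hi2
    rcases eq_or_ne m 2 with rfl | hm2
    · convert_to padicNorm 2 (-1 : ℚ) ≤ 1 using 2
      · norm_num [bernoulli_one]
      · rw [padicNorm.neg, padicNorm.one]
    · have hm4 : 4 ≤ m := by
        rcases hme with ⟨t, ht⟩; omega
      have hodd : Odd (m - 1) := by
        rcases hme with ⟨t, ht⟩; exact ⟨t - 1, by omega⟩
      rw [bernoulli_eq_bernoulli'_of_ne_one (by omega),
        bernoulli'_eq_zero_of_odd hodd (by omega)]
      simp
  · rw [padicNorm.mul, padicNorm.mul]
    have hB := norm_bernoulli_le (p := p) i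
    have hC : padicNorm p ((m.choose i : ℕ) : ℚ) ≤ 1 := padicNorm.of_nat _
    have hj : 2 ≤ m + 1 - i := by omega
    have hex : p ≠ 2 ∨ m + 1 - i ≠ 2 := by
      by_cases h2 : p = 2
      · right
        intro hcon
        exact hsp ⟨h2, by omega⟩
      · exact Or.inl h2
    have hT := norm_p_pow_pred_div_le (p := p) (m + 1 - i) hj hex
    have he : m - i = (m + 1 - i) - 1 := by omega
    rw [he]
    calc padicNorm p (bernoulli i) * padicNorm p ((m.choose i : ℕ) : ℚ) *
          padicNorm p ((p : ℚ) ^ ((m + 1 - i) - 1) / ((m + 1 - i : ℕ) : ℚ))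
        ≤ (p : ℚ) * 1 * (p : ℚ)⁻¹ := by
          have hp0 : (0 : ℚ) < p := by positivity
          refine mul_le_mul (mul_le_mul hB hC (padicNorm.nonneg _) hp0.le) hT
            (padicNorm.nonneg _) (by positivity)
      _ = 1 := by field_simp

lemma norm_bernoulli_eq (m : ℕ) (hm : 0 < m) (hme : Even m) (hd : (p - 1) ∣ m) :
    padicNorm p (bernoulli m) = p := by
  have hp1 : (1 : ℚ) < p := by exact_mod_cast hp.out.one_lt
  set S : ℕ := ∑ k ∈ range p, k ^ m with hSdef
  have hSz : (S : ZMod p) = -1 := by rw [hSdef, sum_pow_zmod m hm, if_pos hd]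
  have hndvd : ¬ p ∣ S := by
    intro h
    have h0 : (S : ZMod p) = 0 := (ZMod.natCast_eq_zero_iff S p).2 h
    rw [hSz] at h0
    exact (neg_ne_zero.mpr (one_ne_zero)) h0
  have hnormS : padicNorm p (S : ℚ) = 1 := (padicNorm.nat_eq_one_iff _).2 hndvd
  have hnorm2 : padicNorm p ((S : ℚ) / p) = p := by
    rw [padicNorm.div, hnormS, padicNorm.padicNorm_p_of_prime]
    field_simp
  have h1 := norm_bernoulli_sub (p := p) m hm hme
  have hne : padicNorm p (bernoulli m - (S : ℚ) / p) ≠ padicNorm p ((S : ℚ) / p) := by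
    rw [hnorm2]; intro hcon; rw [hcon] at h1; linarith
  have hmax := padicNorm.add_eq_max_of_ne (p := p) hne
  rw [sub_add_cancel] at hmax
  rw [hmax, hnorm2]
  exact max_eq_right (le_trans h1 hp1.le)

lemma norm_bernoulli_le_one (m : ℕ) (hm : 0 < m) (hme : Even m) (hd : ¬ (p - 1) ∣ m) :
    padicNorm p (bernoulli m) ≤ 1 := by
  have hp1 : (1 : ℚ) < p := by exact_mod_cast hp.out.one_lt
  set S : ℕ := ∑ k ∈ range p, k ^ m with hSdef
  have hSz : (S : ZMod p) = 0 := by rw [hSdef, sum_pow_zmod m hm, if_neg hd]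
  have hdvd : p ∣ S := (ZMod.natCast_eq_zero_iff S p).1 hSz
  have hnormS : padicNorm p (S : ℚ) ≤ (p : ℚ) ^ (-1 : ℤ) := by
    have hz : ((p ^ 1 : ℕ) : ℤ) ∣ (S : ℤ) := by
      rw [pow_one]
      exact Int.natCast_dvd_natCast.2 hdvd
    have := (padicNorm.dvd_iff_norm_le (p := p) (n := 1) (z := (S : ℤ))).1 hz
    rwa [Int.cast_natCast] at this
  have hnorm2 : padicNorm p ((S : ℚ) / p) ≤ 1 := by
    rw [padicNorm.div, padicNorm.padicNorm_p_of_prime, div_eq_mul_inv, inv_inv]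
    calc padicNorm p (S : ℚ) * p ≤ (p : ℚ) ^ (-1 : ℤ) * p :=
          mul_le_mul_of_nonneg_right hnormS (by positivity)
      _ = 1 := by
          rw [zpow_neg_one]
          field_simp
  have h1 := norm_bernoulli_sub (p := p) m hm hme
  calc padicNorm p (bernoulli m)
      = padicNorm p ((bernoulli m - (S : ℚ) / p) + (S : ℚ) / p) := by rw [sub_add_cancel]
    _ ≤ max (padicNorm p (bernoulli m - (S : ℚ) / p)) (padicNorm p ((S : ℚ) / p)) :=
        padicNorm.nonarchimedean
    _ ≤ 1 := max_le h1 hnorm2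

lemma num_val_zero {x : ℚ} (hden : p ∣ x.den) : padicValInt p x.num = 0 := by
  apply padicValInt.eq_zero_of_not_dvd
  intro hnum
  have h1 : p ∣ x.num.natAbs := Int.natCast_dvd_natCast.1 ((Int.dvd_natAbs).2 hnum)
  have h2 := x.reduced
  have hpd : p ∣ 1 := h2 ▸ Nat.dvd_gcd h1 hden
  exact hp.out.ne_one (Nat.dvd_one.1 hpd)

lemma one_lt_norm_iff_dvd_den (x : ℚ) : 1 < padicNorm p x ↔ p ∣ x.den := by
  have hp1 : (1 : ℚ) < p := by exact_mod_cast hp.out.one_lt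
  by_cases hx : x = 0
  · subst hx
    rw [padicNorm.zero]
    constructor
    · intro h; linarith
    · intro h
      rw [show (0 : ℚ).den = 1 from rfl] at h
      exact absurd (Nat.dvd_one.1 h) hp.out.ne_one
  constructor
  · intro h
    by_contra hden
    have hval : padicValNat p x.den = 0 := padicValNat.eq_zero_of_not_dvd hden
    have hge : 0 ≤ padicValRat p x := by
      rw [padicValRat_def, hval]
      simp
    rw [padicNorm.eq_zpow_of_nonzero hx] at h
    have : (p : ℚ) ^ (-padicValRat p x) ≤ (p : ℚ) ^ (0 : ℤ) :=
      zpow_le_zpow_right₀ hp1.le (by omega)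
    rw [zpow_zero] at this
    linarith
  · intro hden
    have h1 : padicValInt p x.num = 0 := num_val_zero hden
    have h2 : 1 ≤ padicValNat p x.den :=
      one_le_padicValNat_of_dvd x.pos.ne' hden
    rw [padicNorm.eq_zpow_of_nonzero hx, padicValRat_def, h1]
    calc (1 : ℚ) = (p : ℚ) ^ (0 : ℤ) := (zpow_zero _).symm
      _ < (p : ℚ) ^ (-((0 : ℤ) - (padicValNat p x.den : ℤ))) := by
          apply zpow_lt_zpow_right₀ hp1
          omega

lemma not_sq_dvd_den (x : ℚ) (h : padicNorm p x ≤ p) : ¬ (p * p) ∣ x.den := by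
  have hp1 : (1 : ℚ) < p := by exact_mod_cast hp.out.one_lt
  intro hsq
  have hden : p ∣ x.den := dvd_trans (dvd_mul_right p p) hsq
  have hx : x ≠ 0 := by
    intro h0
    rw [h0] at hden
    simp at hden
    exact hp.out.ne_one hden
  have h1 : padicValInt p x.num = 0 := num_val_zero hden
  have h2 : 2 ≤ padicValNat p x.den := by
    rw [← padicValNat_dvd_iff_le x.den_nz]
    rw [pow_two]
    exact hsq
  rw [padicNorm.eq_zpow_of_nonzero hx, padicValRat_def, h1] at h
  simp only [Nat.cast_zero] at h
  have : (p : ℚ) ^ (2 : ℤ) ≤ (p : ℚ) ^ (-((0 : ℤ) - (padicValNat p x.den : ℤ))) :=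
    zpow_le_zpow_right₀ hp1.le (by omega)
  have hp2 : (p : ℚ) ^ (1 : ℤ) < (p : ℚ) ^ (2 : ℤ) := zpow_lt_zpow_right₀ hp1 one_lt_two
  rw [zpow_one] at hp2
  linarith

lemma dvd_den_iff (m : ℕ) (hm : 0 < m) (hme : Even m) :
    p ∣ (bernoulli m).den ↔ (p - 1) ∣ m := by
  constructor
  · intro h
    by_contra hd
    have hle := norm_bernoulli_le_one (p := p) m hm hme hd
    have h1 := (one_lt_norm_iff_dvd_den (p := p) (bernoulli m)).2 h
    linarith
  · intro hd
    rw [← one_lt_norm_iff_dvd_den]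
    rw [norm_bernoulli_eq (p := p) m hm hme hd]
    exact_mod_cast hp.out.one_lt

lemma squarefree_den (n : ℕ) : Squarefree (bernoulli n).den := by
  rw [Nat.squarefree_iff_prime_squarefree]
  intro r hr
  haveI : Fact r.Prime := ⟨hr⟩
  exact not_sq_dvd_den _ (norm_bernoulli_le _)

lemma den_dvd_den {n N : ℕ} (hn : 0 < n) (hN : 0 < N) (hen : Even n) (heN : Even N)
    (hdvd : n ∣ N) : (bernoulli n).den ∣ (bernoulli N).den := by
  rw [← Nat.prod_primeFactors_of_squarefree (squarefree_den n)]
  apply Finset.prod_primes_dvd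
  · intro r hr
    exact Nat.prime_iff.1 (Nat.prime_of_mem_primeFactors hr)
  · intro r hr
    have hrp : r.Prime := Nat.prime_of_mem_primeFactors hr
    haveI : Fact r.Prime := ⟨hrp⟩
    have h1 : r ∣ (bernoulli n).den := Nat.dvd_of_mem_primeFactors hr
    have h2 : (r - 1) ∣ n := (dvd_den_iff n hn hen).1 h1
    exact (dvd_den_iff N hN heN).2 (h2.trans hdvd)

end TodaAux

theorem toda_denominator_growth (a p m i q : ℕ) (ha : 0 < a)
    (hpa : p ∈ TodaSet a) (hp5 : 5 < p) (hm : 0 < m) (hpm : p ∣ m)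
    (hpna : ¬ p ∣ a) (hi : i ∣ 2 * a) (hq : q = 2 * p * i + 1) (hqp : q.Prime) :
    ((q - 1 ∣ 4 * a * m) ∧ ¬ (q - 1 ∣ 4 * a)) ∧
      (bernoulli (4 * a)).den < (bernoulli (4 * a * m)).den := by
  obtain ⟨hpp, hpodd, -, -⟩ := hpa
  have hq1 : q - 1 = 2 * p * i := by rw [hq, Nat.add_sub_cancel]
  have hd1 : q - 1 ∣ 4 * a * m := by
    rw [hq1]
    have h2i : 2 * i ∣ 4 * a := by
      obtain ⟨c, hc⟩ := hi
      exact ⟨c, by rw [show 4 * a = 2 * (2 * a) by ring, hc]; ring⟩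
    have hrw : 2 * p * i = (2 * i) * p := by ring
    rw [hrw]
    exact mul_dvd_mul h2i hpm
  have hd2 : ¬ (q - 1 ∣ 4 * a) := by
    rw [hq1]
    intro hcon
    have hp4a : p ∣ 4 * a := dvd_trans ⟨2 * i, by ring⟩ hcon
    rcases (Nat.Prime.dvd_mul hpp).1 hp4a with h | h
    · have := Nat.le_of_dvd (by norm_num) h
      omega
    · exact hpna h
  refine ⟨⟨hd1, hd2⟩, ?_⟩
  haveI : Fact q.Prime := ⟨hqp⟩
  have h4a : 0 < 4 * a := by omega
  have h4am : 0 < 4 * a * m := by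
    have := Nat.mul_pos h4a hm
    omega
  have he1 : Even (4 * a) := ⟨2 * a, by ring⟩
  have he2 : Even (4 * a * m) := ⟨2 * a * m, by ring⟩
  have hdvd : (bernoulli (4 * a)).den ∣ (bernoulli (4 * a * m)).den :=
    TodaAux.den_dvd_den h4a h4am he1 he2 ⟨m, rfl⟩
  have hqdvd : q ∣ (bernoulli (4 * a * m)).den :=
    (TodaAux.dvd_den_iff _ h4am he2).2 hd1
  have hqnot : ¬ q ∣ (bernoulli (4 * a)).den := fun h =>
    hd2 ((TodaAux.dvd_den_iff _ h4a he1).1 h)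
  have hle : (bernoulli (4 * a)).den ≤ (bernoulli (4 * a * m)).den :=
    Nat.le_of_dvd (bernoulli (4 * a * m)).pos hdvd
  have hne : (bernoulli (4 * a)).den ≠ (bernoulli (4 * a * m)).den := by
    intro h
    rw [h] at hqnot
    exact hqnot hqdvd
  omega
end
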